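/- Let A be a finite-dimensional complex Hilbert space, let ρ be any Hermitian matrix on A, and let γ be a positive definite matrix on A. Then ‖ρ‖₁ ≤ √( Tr[γ] · Tr[ (γ^{−1/4} ρ γ^{−1/4})² ] ), where γ^{−1/4} is the inverse of the positive fourth root of γ. -/

import Mathlib

open scoped BigOperators Kronecker Classical ComplexOrder
open Matrix MeasureTheory

noncomputable section

/-- Outer product `|v⟩⟨v|`. -/
def outer {A : Type*} [Fintype A] (v : A → ℂ) : Matrix A A ℂ :=
  Matrix.of fun i j => v i * star (v j)

/-- The square root `U √D Uᴴ` of a matrix, as Mathlib's former `Matrix.PosSemidef.sqrt`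
(defined from the eigendecomposition; only the Hermitian part of the proof was used). -/
def psdSqrt {n 𝕜 : Type*} [Fintype n] [DecidableEq n] [RCLike 𝕜] {A : Matrix n n 𝕜}
    (hA : A.IsHermitian) : Matrix n n 𝕜 :=
  (hA.eigenvectorUnitary : Matrix n n 𝕜) * diagonal ((↑) ∘ (√·) ∘ hA.eigenvalues) *
    (star hA.eigenvectorUnitary : Matrix n n 𝕜)

theorem psdSqrt_isHermitian {n 𝕜 : Type*} [Fintype n] [DecidableEq n] [RCLike 𝕜]
    {A : Matrix n n 𝕜} (hA : A.IsHermitian) : (psdSqrt hA).IsHermitian := by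
  unfold psdSqrt
  exact isHermitian_mul_mul_conjTranspose _
    (isHermitian_diagonal_of_self_adjoint _ (by ext i; simp))

/-- Trace norm `‖X‖₁ = Tr √(XᴴX)`. -/
def traceNorm {A : Type*} [Fintype A] [DecidableEq A] (X : Matrix A A ℂ) : ℝ :=
  (psdSqrt (Matrix.posSemidef_conjTranspose_mul_self X).1).trace.re

/-- Frobenius norm `‖X‖₂`. -/
def frobNorm {A : Type*} [Fintype A] (X : Matrix A A ℂ) : ℝ :=
  Real.sqrt ((Xᴴ * X).trace.re)

/-- Operator norm (largest singular value) `‖X‖_∞`. -/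
def opNorm {A : Type*} [Fintype A] [DecidableEq A] (X : Matrix A A ℂ) : ℝ :=
  ‖Matrix.toEuclideanCLM (𝕜 := ℂ) X‖

instance matrixMeasurableSpace {m n : Type*} : MeasurableSpace (Matrix m n ℂ) :=
  inferInstanceAs (MeasurableSpace (m → n → ℂ))

/-- A measurement superoperator (given by its POVM elements `Ms`) applied to the second
factor of a bipartite operator, tensored with the identity on the first factor `W`. -/
def measApply {W A X : Type*} [Fintype A] [DecidableEq X]
    (Ms : X → Matrix A A ℂ) (ρ : Matrix (W × A) (W × A) ℂ) :
    Matrix (W × X) (W × X) ℂ :=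
  Matrix.of fun p q =>
    if p.2 = q.2 then ∑ a : A, ∑ a' : A, Ms p.2 a a' * ρ (p.1, a') (q.1, a) else 0

/-- A measurement superoperator applied to an operator (no side register). -/
def measApply0 {A X : Type*} [Fintype A] [DecidableEq X]
    (Ms : X → Matrix A A ℂ) (ρ : Matrix A A ℂ) : Matrix X X ℂ :=
  Matrix.of fun i j => if i = j then ∑ a : A, ∑ a' : A, Ms i a a' * ρ a' a else 0

/-- The elements `Ms` form a POVM: each is positive semidefinite and they sum to `I`. -/
def IsPOVM {A X : Type*} [Fintype A] [Fintype X] [DecidableEq A]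
    (Ms : X → Matrix A A ℂ) : Prop :=
  (∀ i, (Ms i).PosSemidef) ∧ ∑ i, Ms i = 1

/-- The tuple of unit vectors `χ` defines an `(s,η)`-quasi-measurement:
`(|A|/s) ∑ᵢ |χᵢ⟩⟨χᵢ| ≤ η I`. -/
def IsQuasiTuple {A : Type*} [Fintype A] [DecidableEq A] (s : ℕ) (η : ℝ)
    (χ : Fin s → A → ℂ) : Prop :=
  (∀ i, ∑ a, Complex.normSq (χ i a) = 1) ∧
  ((η : ℂ) • (1 : Matrix A A ℂ) -
    ((Fintype.card A : ℂ) / (s : ℂ)) • ∑ i, outer (χ i)).PosSemidef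

/-- The kernel elements `(|A|/s)|χᵢ⟩⟨χᵢ|` of an `(s,η)`-quasi-measurement. -/
def quasiKernel {A : Type*} [Fintype A] (s : ℕ) (χ : Fin s → A → ℂ) :
    Fin s → Matrix A A ℂ :=
  fun i => ((Fintype.card A : ℂ) / (s : ℂ)) • outer (χ i)

/-- The inverse fourth root `γ^{-1/4}` of a positive definite matrix. -/
def invFourthRoot {n : ℕ} {γ : Matrix (Fin n) (Fin n) ℂ} (hγ : γ.PosDef) :
    Matrix (Fin n) (Fin n) ℂ :=
  (psdSqrt (psdSqrt_isHermitian hγ.posSemidef.1))⁻¹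

open scoped MatrixOrder in
lemma psdSqrt_eq_cfc {n : ℕ} {A : Matrix (Fin n) (Fin n) ℂ} (hA : A.PosSemidef) :
    psdSqrt hA.1 = CFC.sqrt A := by
  rw [CFC.sqrt_eq_real_sqrt A hA.nonneg, cfcₙ_eq_cfc, hA.1.cfc_eq]
  simp [psdSqrt, IsHermitian.cfc, Unitary.conjStarAlgAut_apply]

open scoped MatrixOrder in
lemma psdSqrt_posSemidef {n : ℕ} {A : Matrix (Fin n) (Fin n) ℂ} (hA : A.PosSemidef) :
    (psdSqrt hA.1).PosSemidef := by
  rw [psdSqrt_eq_cfc hA]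
  exact (CFC.sqrt_nonneg A).posSemidef

open scoped MatrixOrder in
lemma psdSqrt_mul_self {n : ℕ} {A : Matrix (Fin n) (Fin n) ℂ} (hA : A.PosSemidef) :
    psdSqrt hA.1 * psdSqrt hA.1 = A := by
  rw [psdSqrt_eq_cfc hA]
  exact CFC.sqrt_mul_sqrt_self A hA.nonneg

open scoped MatrixOrder in
lemma eq_psdSqrt_of_sq_eq {n : ℕ} {A B : Matrix (Fin n) (Fin n) ℂ} (hB : B.PosSemidef)
    (hA : A.PosSemidef) (h : B ^ 2 = A) : B = psdSqrt hA.1 := by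
  rw [psdSqrt_eq_cfc hA]
  exact (CFC.sqrt_unique (by rw [← pow_two]; exact h) hB.nonneg).symm

lemma trace_re_nonneg {n : ℕ} {γ : Matrix (Fin n) (Fin n) ℂ} (h : γ.PosSemidef) :
    0 ≤ γ.trace.re := by
  have h1 : ∀ i, 0 ≤ (γ i i).re := by
    intro i
    have h2 := h.diag_nonneg (i := i)
    exact (Complex.le_def.mp h2).1
  rw [Matrix.trace, Complex.re_sum]
  exact Finset.sum_nonneg fun i _ => h1 i


/-- Cauchy–Schwarz for the trace inner product. -/
lemma trace_CS {n : ℕ} (A B : Matrix (Fin n) (Fin n) ℂ) :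
    ‖(Aᴴ * B).trace‖ ≤
      Real.sqrt ((Aᴴ * A).trace.re) * Real.sqrt ((Bᴴ * B).trace.re) := by
  let f : Matrix (Fin n) (Fin n) ℂ → EuclideanSpace ℂ (Fin n × Fin n) :=
    fun M => WithLp.toLp 2 (fun p : Fin n × Fin n => M p.1 p.2)
  have hinner : ∀ M N : Matrix (Fin n) (Fin n) ℂ,
      (Mᴴ * N).trace = @inner ℂ _ _ (f M) (f N) := by
    intro M N
    simp only [PiLp.inner_apply, RCLike.inner_apply, f, Matrix.trace, Matrix.diag,
      Matrix.mul_apply, Matrix.conjTranspose_apply, Fintype.sum_prod_type,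
      RCLike.star_def, PiLp.toLp_apply]
    rw [Finset.sum_comm]
    exact Finset.sum_congr rfl fun _ _ => Finset.sum_congr rfl fun _ _ => mul_comm _ _
  have hnorm : ∀ M : Matrix (Fin n) (Fin n) ℂ,
      Real.sqrt ((Mᴴ * M).trace.re) = ‖f M‖ := by
    intro M
    rw [hinner]
    have := @inner_self_eq_norm_sq ℂ _ _ _ _ (f M)
    rw [show (@inner ℂ _ _ (f M) (f M)).re = RCLike.re (@inner ℂ _ _ (f M) (f M)) from rfl,
      this]
    exact Real.sqrt_sq (norm_nonneg _)
  rw [hinner, hnorm, hnorm]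
  exact norm_inner_le_norm _ _


lemma exists_sign_unitary {n : ℕ} (ρ : Matrix (Fin n) (Fin n) ℂ) (hρ : ρ.IsHermitian) :
    ∃ U : Matrix (Fin n) (Fin n) ℂ, Uᴴ = U ∧ U * U = 1 ∧
      U * ρ = psdSqrt (Matrix.posSemidef_conjTranspose_mul_self ρ).1 := by
  set V : Matrix (Fin n) (Fin n) ℂ := (hρ.eigenvectorUnitary : Matrix (Fin n) (Fin n) ℂ) with hV
  have hVV : V * Vᴴ = 1 := (Matrix.mem_unitaryGroup_iff).mp hρ.eigenvectorUnitary.2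
  have hVV' : Vᴴ * V = 1 := (Matrix.mem_unitaryGroup_iff').mp hρ.eigenvectorUnitary.2
  set s : Fin n → ℂ := fun i => if hρ.eigenvalues i < 0 then (-1 : ℂ) else 1 with hs
  set S : Matrix (Fin n) (Fin n) ℂ := Matrix.diagonal s with hS
  refine ⟨V * S * Vᴴ, ?_, ?_, ?_⟩
  · have hSh : Sᴴ = S := by
      rw [hS, Matrix.diagonal_conjTranspose]
      refine congrArg Matrix.diagonal (funext fun i => ?_)
      simp only [Pi.star_apply, hs]
      split <;> simp
    simp [Matrix.conjTranspose_mul, hSh, Matrix.mul_assoc]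
  · have hSS : S * S = 1 := by
      rw [hS, Matrix.diagonal_mul_diagonal,
        show (1 : Matrix (Fin n) (Fin n) ℂ) = Matrix.diagonal (fun _ => 1) by simp]
      refine congrArg Matrix.diagonal (funext fun i => ?_)
      simp only [Pi.mul_apply, hs]
      split <;> norm_num
    calc V * S * Vᴴ * (V * S * Vᴴ) = V * S * (Vᴴ * V) * S * Vᴴ := by
          simp only [Matrix.mul_assoc]
      _ = V * (S * S) * Vᴴ := by rw [hVV']; simp only [Matrix.mul_one, Matrix.mul_assoc]
      _ = 1 := by rw [hSS, Matrix.mul_one, hVV]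
  · set E : Matrix (Fin n) (Fin n) ℂ :=
      Matrix.diagonal (fun i => (RCLike.ofReal |hρ.eigenvalues i| : ℂ)) with hE
    set D : Matrix (Fin n) (Fin n) ℂ :=
      Matrix.diagonal (RCLike.ofReal ∘ hρ.eigenvalues) with hD
    have hspec : ρ = V * D * Vᴴ := hρ.spectral_theorem
    have hSD : S * D = E := by
      rw [hS, hD, hE, Matrix.diagonal_mul_diagonal]
      refine congrArg Matrix.diagonal (funext fun i => ?_)
      simp only [Pi.mul_apply, hs, Function.comp_apply]
      split
      · rename_i h
        rw [abs_of_neg h, RCLike.ofReal_neg]; ring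
      · rename_i h
        rw [abs_of_nonneg (not_lt.mp h)]; ring
    have key : (V * S * Vᴴ) * ρ = V * E * Vᴴ := by
      calc (V * S * Vᴴ) * ρ = V * S * (Vᴴ * V) * D * Vᴴ := by
            rw [hspec]; simp only [Matrix.mul_assoc]
        _ = V * (S * D) * Vᴴ := by rw [hVV']; simp only [Matrix.mul_one, Matrix.mul_assoc]
        _ = V * E * Vᴴ := by rw [hSD]
    rw [key]
    have hpsd : (V * E * Vᴴ).PosSemidef := by
      apply Matrix.PosSemidef.mul_mul_conjTranspose_same
      rw [hE, Matrix.posSemidef_diagonal_iff]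
      intro i
      rw [RCLike.ofReal_nonneg]
      exact abs_nonneg _
    apply eq_psdSqrt_of_sq_eq hpsd (Matrix.posSemidef_conjTranspose_mul_self ρ)
    have hEE : E * E = D * D := by
      rw [hE, hD, Matrix.diagonal_mul_diagonal, Matrix.diagonal_mul_diagonal]
      refine congrArg Matrix.diagonal (funext fun i => ?_)
      simp only [Pi.mul_apply, Function.comp_apply, ← RCLike.ofReal_mul, abs_mul_abs_self]
    calc (V * E * Vᴴ) ^ 2 = V * E * (Vᴴ * V) * E * Vᴴ := by
          rw [pow_two]; simp only [Matrix.mul_assoc]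
      _ = V * (E * E) * Vᴴ := by rw [hVV']; simp only [Matrix.mul_one, Matrix.mul_assoc]
      _ = V * D * (Vᴴ * V) * D * Vᴴ := by
          rw [hEE, hVV']; simp only [Matrix.mul_one, Matrix.mul_assoc]
      _ = ρᴴ * ρ := by rw [hρ.eq]; conv_rhs => rw [hspec]
                       simp only [Matrix.mul_assoc]

/-- Lemma `lem:tight12`: `‖ρ‖₁ ≤ √(Tr[γ]·Tr[(γ^{-1/4} ρ γ^{-1/4})²])`. -/
theorem trace_norm_le_weighted_two_norm
    {n : ℕ} (ρ γ : Matrix (Fin n) (Fin n) ℂ)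
    (hρ : ρ.IsHermitian) (hγ : γ.PosDef) :
    traceNorm ρ ≤ Real.sqrt (γ.trace.re *
      ((invFourthRoot hγ * ρ * invFourthRoot hγ) *
        (invFourthRoot hγ * ρ * invFourthRoot hγ)).trace.re) := by
  obtain ⟨U, hUh, hUU, hUρ⟩ := exists_sign_unitary ρ hρ
  set Q : Matrix (Fin n) (Fin n) ℂ := psdSqrt (psdSqrt_isHermitian hγ.posSemidef.1) with hQdef
  have hQps : Q.PosSemidef := psdSqrt_posSemidef (psdSqrt_posSemidef hγ.posSemidef)
  set P : Matrix (Fin n) (Fin n) ℂ := psdSqrt hγ.posSemidef.1 with hPdef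
  have hPps : P.PosSemidef := psdSqrt_posSemidef hγ.posSemidef
  have hQQ : Q * Q = P := psdSqrt_mul_self hPps
  have hPP : P * P = γ := psdSqrt_mul_self hγ.posSemidef
  have hγdet : γ.det ≠ 0 := ne_of_gt hγ.det_pos
  have hPdet : P.det ≠ 0 := by
    intro h
    apply hγdet
    rw [← hPP, Matrix.det_mul, h, mul_zero]
  have hQdet : IsUnit Q.det := by
    rw [isUnit_iff_ne_zero]
    intro h
    apply hPdet
    rw [← hQQ, Matrix.det_mul, h, mul_zero]
  set C : Matrix (Fin n) (Fin n) ℂ := invFourthRoot hγ with hCdef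
  have hCQinv : C = Q⁻¹ := rfl
  have hQC : Q * C = 1 := by rw [hCQinv]; exact Matrix.mul_nonsing_inv Q hQdet
  have hCQ : C * Q = 1 := by rw [hCQinv]; exact Matrix.nonsing_inv_mul Q hQdet
  have hCh : Cᴴ = C := by rw [hCQinv, Matrix.conjTranspose_nonsing_inv, hQps.1.eq]
  clear_value C Q P
  set B : Matrix (Fin n) (Fin n) ℂ := C * ρ * C with hBdef
  have hBh : Bᴴ = B := by
    rw [hBdef]
    simp only [Matrix.conjTranspose_mul, hCh, hρ.eq, Matrix.mul_assoc]
  set X : Matrix (Fin n) (Fin n) ℂ := Q * U * Q with hXdef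
  have hXh : Xᴴ = X := by
    rw [hXdef]
    simp only [Matrix.conjTranspose_mul, hQps.1.eq, hUh, Matrix.mul_assoc]
  -- trace identity
  have htr1 : (U * ρ).trace = (Xᴴ * B).trace := by
    have : Xᴴ * B = Q * (U * ρ * C) := by
      rw [hXh, hXdef, hBdef]
      calc Q * U * Q * (C * ρ * C) = Q * (U * ((Q * C) * (ρ * C))) := by
            simp only [Matrix.mul_assoc]
        _ = Q * (U * ρ * C) := by rw [hQC, one_mul, Matrix.mul_assoc]
    rw [this, Matrix.trace_mul_comm Q (U * ρ * C), Matrix.mul_assoc, Matrix.mul_assoc, hCQ,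
      Matrix.mul_one]
  -- bound Tr(XᴴX).re ≤ γ.trace.re
  have hγtr : 0 ≤ γ.trace.re := trace_re_nonneg hγ.posSemidef
  have hXX : (Xᴴ * X).trace.re ≤ γ.trace.re := by
    set Y : Matrix (Fin n) (Fin n) ℂ := U * P * U with hYdef
    have hYh : Yᴴ = Y := by
      rw [hYdef]
      simp only [Matrix.conjTranspose_mul, hUh, hPps.1.eq, Matrix.mul_assoc]
    have h1 : (Xᴴ * X).trace = (Yᴴ * P).trace := by
      have hx : Xᴴ * X = Q * (U * P * U * Q) := by
        rw [hXh, hXdef]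
        calc Q * U * Q * (Q * U * Q) = Q * (U * (Q * Q) * U * Q) := by
              simp only [Matrix.mul_assoc]
          _ = Q * (U * P * U * Q) := by rw [hQQ]
      rw [hx, Matrix.trace_mul_comm Q (U * P * U * Q), hYh]
      congr 1
      calc U * P * U * Q * Q = U * P * U * (Q * Q) := by simp only [Matrix.mul_assoc]
        _ = Y * P := by rw [hQQ, hYdef]
    have h2 : (Yᴴ * Y).trace = γ.trace := by
      have hy : Yᴴ * Y = U * (γ * U) := by
        rw [hYh, hYdef]
        calc U * P * U * (U * P * U) = U * (P * (U * U) * P * U) := by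
              simp only [Matrix.mul_assoc]
          _ = U * (P * P * U) := by rw [hUU, Matrix.mul_one, Matrix.mul_assoc]
          _ = U * (γ * U) := by rw [hPP]
      rw [hy, Matrix.trace_mul_comm U (γ * U), Matrix.mul_assoc, hUU, Matrix.mul_one]
    have h3 : (Pᴴ * P).trace = γ.trace := by rw [hPps.1.eq, hPP]
    calc (Xᴴ * X).trace.re ≤ ‖(Xᴴ * X).trace‖ := Complex.re_le_norm _
      _ = ‖(Yᴴ * P).trace‖ := by rw [h1]
      _ ≤ Real.sqrt ((Yᴴ * Y).trace.re) * Real.sqrt ((Pᴴ * P).trace.re) := trace_CS Y P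
      _ = Real.sqrt (γ.trace.re) * Real.sqrt (γ.trace.re) := by rw [h2, h3]
      _ = γ.trace.re := Real.mul_self_sqrt hγtr
  -- assemble
  have hBB : 0 ≤ (B * B).trace.re := by
    have : (Bᴴ * B).trace.re = (B * B).trace.re := by rw [hBh]
    rw [← this]
    exact trace_re_nonneg (Matrix.posSemidef_conjTranspose_mul_self B)
  have step1 : traceNorm ρ = (U * ρ).trace.re := by rw [traceNorm, ← hUρ]
  calc traceNorm ρ = (U * ρ).trace.re := step1
    _ ≤ ‖(U * ρ).trace‖ := Complex.re_le_norm _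
    _ = ‖(Xᴴ * B).trace‖ := by rw [htr1]
    _ ≤ Real.sqrt ((Xᴴ * X).trace.re) * Real.sqrt ((Bᴴ * B).trace.re) := trace_CS X B
    _ ≤ Real.sqrt (γ.trace.re) * Real.sqrt ((Bᴴ * B).trace.re) := by
        apply mul_le_mul_of_nonneg_right (Real.sqrt_le_sqrt hXX) (Real.sqrt_nonneg _)
    _ = Real.sqrt (γ.trace.re * (B * B).trace.re) := by
        rw [hBh, Real.sqrt_mul hγtr]
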